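/- The subspace W + σ(W) of H_ℂ is a two-sided ideal of the ℂ-algebra H_ℂ. Moreover W = H^{2,0} + H^{2,0}·H^{0,2} with H^{2,0}·H^{0,2} ⊆ H^{1,1}, so that W + σ(W) is the direct sum of its intersections with H^{2,0}, H^{1,1} and H^{0,2} (it is stable under the Hodge decomposition), and t(W + σ(W)) ⊆ W + σ(W). -/

import Mathlib

open scoped TensorProduct

noncomputable section

/-- Complex conjugation on `ℂ` as a `ℚ`-algebra homomorphism. -/
def conjQAlg : ℂ →ₐ[ℚ] ℂ := (Complex.conjAe.restrictScalars ℚ).toAlgHom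

variable (H : Type) [Ring H] [Algebra ℚ H] [FiniteDimensional ℚ H]

/-- The conjugate-linear involution of `H_ℂ = ℂ ⊗[ℚ] H` fixing `H`. -/
def sigmaC : ℂ ⊗[ℚ] H →ₗ[ℚ] ℂ ⊗[ℚ] H :=
  (Algebra.TensorProduct.map conjQAlg (AlgHom.id ℚ H)).toLinearMap

/-- The inclusion of `H` into `H_ℂ = ℂ ⊗[ℚ] H`. -/
def inclH : H →ₐ[ℚ] ℂ ⊗[ℚ] H := Algebra.TensorProduct.includeRight

/-- The data of a polarized weight 2 Hodge structure on a finite-dimensional `ℚ`-algebra `H`,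
compatible with the ring structure:
(i) a Hodge decomposition `H_ℂ = H^{2,0} ⊕ H^{1,1} ⊕ H^{0,2}` with `σ(H^{2,0}) = H^{0,2}`,
`σ(H^{1,1}) = H^{1,1}`;
(ii) a polarization: a symmetric `ℚ`-bilinear form `B` on `H` with `ℂ`-bilinear extension `BC`
to `H_ℂ`, whose associated Hermitian pairing `h(α,β) := BC α (σ β)` makes the Hodge pieces
pairwise orthogonal and is positive definite on `H^{2,0}`, `H^{0,2}` and negative definite on
`H^{1,1}`;
(iii) the product is a morphism of Hodge structures of bidegree `(-1,-1)`:
`H^{p,q}·H^{p',q'} ⊆ H^{p+p'-1,q+q'-1}`;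
(iv) an adjunction `t`: a `ℚ`-linear involution with `t(ab) = t(b)t(a)`,
`⟨ab,c⟩ = ⟨b, t(a)c⟩` and `⟨ab,c⟩ = ⟨a, c·t(b)⟩`. -/
structure HodgeAlgebraData where
  H20 : Submodule ℂ (ℂ ⊗[ℚ] H)
  H11 : Submodule ℂ (ℂ ⊗[ℚ] H)
  H02 : Submodule ℂ (ℂ ⊗[ℚ] H)
  sup_top : H20 ⊔ H11 ⊔ H02 = ⊤
  disj1 : H20 ⊓ (H11 ⊔ H02) = ⊥
  disj2 : H11 ⊓ H02 = ⊥
  sigma_20 : ∀ x ∈ H20, sigmaC H x ∈ H02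
  sigma_02 : ∀ x ∈ H02, sigmaC H x ∈ H20
  sigma_11 : ∀ x ∈ H11, sigmaC H x ∈ H11
  B : H →ₗ[ℚ] H →ₗ[ℚ] ℚ
  B_symm : ∀ a b : H, B a b = B b a
  BC : (ℂ ⊗[ℚ] H) →ₗ[ℂ] (ℂ ⊗[ℚ] H) →ₗ[ℂ] ℂ
  BC_extends : ∀ a b : H, BC (inclH H a) (inclH H b) = (B a b : ℂ)
  BC_symm : ∀ x y, BC x y = BC y x
  BC_conj : ∀ x y, BC (sigmaC H x) (sigmaC H y) = starRingEnd ℂ (BC x y)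
  orth_20_11 : ∀ x ∈ H20, ∀ y ∈ H11, BC x (sigmaC H y) = 0
  orth_20_02 : ∀ x ∈ H20, ∀ y ∈ H02, BC x (sigmaC H y) = 0
  orth_11_02 : ∀ x ∈ H11, ∀ y ∈ H02, BC x (sigmaC H y) = 0
  pos_20 : ∀ x ∈ H20, x ≠ 0 → 0 < (BC x (sigmaC H x)).re ∧ (BC x (sigmaC H x)).im = 0
  pos_02 : ∀ x ∈ H02, x ≠ 0 → 0 < (BC x (sigmaC H x)).re ∧ (BC x (sigmaC H x)).im = 0
  neg_11 : ∀ x ∈ H11, x ≠ 0 → (BC x (sigmaC H x)).re < 0 ∧ (BC x (sigmaC H x)).im = 0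
  mul_20_20 : ∀ x ∈ H20, ∀ y ∈ H20, x * y = 0
  mul_20_11 : ∀ x ∈ H20, ∀ y ∈ H11, x * y ∈ H20
  mul_11_20 : ∀ x ∈ H11, ∀ y ∈ H20, x * y ∈ H20
  mul_11_11 : ∀ x ∈ H11, ∀ y ∈ H11, x * y ∈ H11
  mul_20_02 : ∀ x ∈ H20, ∀ y ∈ H02, x * y ∈ H11
  mul_02_20 : ∀ x ∈ H02, ∀ y ∈ H20, x * y ∈ H11
  mul_02_02 : ∀ x ∈ H02, ∀ y ∈ H02, x * y = 0
  mul_11_02 : ∀ x ∈ H11, ∀ y ∈ H02, x * y ∈ H02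
  mul_02_11 : ∀ x ∈ H02, ∀ y ∈ H11, x * y ∈ H02
  t : H →ₗ[ℚ] H
  t_invol : ∀ a : H, t (t a) = a
  t_mul : ∀ a b : H, t (a * b) = t b * t a
  adj_left : ∀ a b c : H, B (a * b) c = B b (t a * c)
  adj_right : ∀ a b c : H, B (a * b) c = B a (c * t b)

variable {H}

/-- `W := H^{2,0}·H_ℂ`, the `ℂ`-linear span of all products `x·y` with `x ∈ H^{2,0}`,
`y ∈ H_ℂ`. -/
def HodgeAlgebraData.W (D : HodgeAlgebraData H) : Submodule ℂ (ℂ ⊗[ℚ] H) := D.H20 * ⊤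

/-- `σ(W)`, the image of `W` under the conjugation `σ`, as a `ℚ`-subspace of `H_ℂ`. -/
def HodgeAlgebraData.sigmaW (D : HodgeAlgebraData H) : Submodule ℚ (ℂ ⊗[ℚ] H) :=
  (D.W.restrictScalars ℚ).map (sigmaC H)

/-- The `ℂ`-linear extension of `t` to `H_ℂ`. -/
def HodgeAlgebraData.tC (D : HodgeAlgebraData H) : ℂ ⊗[ℚ] H →ₗ[ℂ] ℂ ⊗[ℚ] H :=
  LinearMap.baseChange ℂ D.t

set_option linter.unusedSectionVars false
section SigmaLemmas
variable {H : Type} [Ring H] [Algebra ℚ H] [FiniteDimensional ℚ H]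
lemma sigmaC_tmul (c : ℂ) (a : H) :
    sigmaC H (c ⊗ₜ[ℚ] a) = (starRingEnd ℂ c) ⊗ₜ[ℚ] a := rfl

lemma sigmaC_sigmaC (x : ℂ ⊗[ℚ] H) : sigmaC H (sigmaC H x) = x := by
  induction x using TensorProduct.induction_on with
  | zero => simp
  | tmul c a => simp [sigmaC_tmul]
  | add x y hx hy => simp [map_add, hx, hy]

lemma sigmaC_mul (x y : ℂ ⊗[ℚ] H) :
    sigmaC H (x * y) = sigmaC H x * sigmaC H y := by
  exact map_mul (Algebra.TensorProduct.map conjQAlg (AlgHom.id ℚ H)) x y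

lemma sigmaC_one : sigmaC H (1 : ℂ ⊗[ℚ] H) = 1 := by
  exact map_one (Algebra.TensorProduct.map conjQAlg (AlgHom.id ℚ H))

lemma sigmaC_smul (c : ℂ) (x : ℂ ⊗[ℚ] H) :
    sigmaC H (c • x) = (starRingEnd ℂ c) • sigmaC H x := by
  induction x using TensorProduct.induction_on with
  | zero => simp
  | tmul d a =>
      rw [TensorProduct.smul_tmul', sigmaC_tmul, sigmaC_tmul, TensorProduct.smul_tmul']
      simp [smul_eq_mul]
  | add x y hx hy => simp [map_add, smul_add, hx, hy]

lemma inclH_apply (a : H) : inclH H a = (1 : ℂ) ⊗ₜ[ℚ] a := rfl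

lemma sigmaC_inclH (a : H) : sigmaC H (inclH H a) = inclH H a := by
  simp [inclH_apply, sigmaC_tmul]

/-- extension lemma: two `ℂ`-linear maps agreeing on `inclH H` agree. -/
lemma ext_inclH {M : Type*} [AddCommMonoid M] [Module ℂ M]
    (f g : ℂ ⊗[ℚ] H →ₗ[ℂ] M) (h : ∀ a : H, f (inclH H a) = g (inclH H a)) : f = g := by
  ext x
  induction x using TensorProduct.induction_on with
  | zero => simp
  | tmul c a =>
      have hc : c ⊗ₜ[ℚ] a = c • ((1 : ℂ) ⊗ₜ[ℚ] a) := by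
        rw [TensorProduct.smul_tmul']; simp [smul_eq_mul]
      rw [hc, map_smul, map_smul]
      exact congrArg (c • ·) (h a)
  | add x y hx hy => simp [map_add, hx, hy]
end SigmaLemmas
set_option linter.unusedSectionVars false

section Helpers

variable {H : Type} [Ring H] [Algebra ℚ H] [FiniteDimensional ℚ H]
variable (D : HodgeAlgebraData H)

lemma tC_inclH (a : H) : D.tC (inclH H a) = inclH H (D.t a) := by
  simp [HodgeAlgebraData.tC, inclH_apply, LinearMap.baseChange_tmul]

lemma tC_sigmaC (x : ℂ ⊗[ℚ] H) : D.tC (sigmaC H x) = sigmaC H (D.tC x) := by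
  induction x using TensorProduct.induction_on with
  | zero => simp
  | tmul c a =>
      simp [sigmaC_tmul, HodgeAlgebraData.tC, LinearMap.baseChange_tmul]
  | add x y hx hy => simp [map_add, hx, hy]

lemma tC_mul (a b : ℂ ⊗[ℚ] H) : D.tC (a * b) = D.tC b * D.tC a := by
  -- first for generators in `b`, any `a`; then generalize.
  have hgen : ∀ a₀ b₀ : H,
      D.tC (inclH H a₀ * inclH H b₀) = D.tC (inclH H b₀) * D.tC (inclH H a₀) := by
    intro a₀ b₀
    rw [← map_mul, tC_inclH, tC_inclH, tC_inclH, ← map_mul, ← D.t_mul]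
  have hb : ∀ a₀ : H, ∀ b : ℂ ⊗[ℚ] H,
      D.tC (inclH H a₀ * b) = D.tC b * D.tC (inclH H a₀) := by
    intro a₀ b
    have := ext_inclH (D.tC.comp (LinearMap.mulLeft ℂ (inclH H a₀)))
      ((LinearMap.mulRight ℂ (D.tC (inclH H a₀))).comp D.tC) (fun b₀ => by
        simpa using hgen a₀ b₀)
    simpa using LinearMap.congr_fun this b
  have := ext_inclH (D.tC.comp (LinearMap.mulRight ℂ b))
    ((LinearMap.mulLeft ℂ (D.tC b)).comp D.tC) (fun a₀ => by
      simpa using hb a₀ b)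
  simpa using LinearMap.congr_fun this a

lemma BC_adj_right (a b c : ℂ ⊗[ℚ] H) :
    D.BC (a * b) c = D.BC a (c * D.tC b) := by
  have hgen : ∀ a₀ b₀ c₀ : H,
      D.BC (inclH H a₀ * inclH H b₀) (inclH H c₀)
        = D.BC (inclH H a₀) (inclH H c₀ * D.tC (inclH H b₀)) := by
    intro a₀ b₀ c₀
    rw [tC_inclH, ← map_mul, ← map_mul, D.BC_extends, D.BC_extends, D.adj_right]
  have hc : ∀ a₀ b₀ : H, ∀ c : ℂ ⊗[ℚ] H,
      D.BC (inclH H a₀ * inclH H b₀) c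
        = D.BC (inclH H a₀) (c * D.tC (inclH H b₀)) := by
    intro a₀ b₀ c
    have := ext_inclH (D.BC (inclH H a₀ * inclH H b₀))
      ((D.BC (inclH H a₀)).comp (LinearMap.mulRight ℂ (D.tC (inclH H b₀))))
      (fun c₀ => by simpa using hgen a₀ b₀ c₀)
    simpa using LinearMap.congr_fun this c
  have hbc : ∀ a₀ : H, ∀ b c : ℂ ⊗[ℚ] H,
      D.BC (inclH H a₀ * b) c = D.BC (inclH H a₀) (c * D.tC b) := by
    intro a₀ b c
    have := ext_inclH ((D.BC.flip c).comp (LinearMap.mulLeft ℂ (inclH H a₀)))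
      (((D.BC (inclH H a₀)).comp (LinearMap.mulLeft ℂ c)).comp D.tC)
      (fun b₀ => by simpa using hc a₀ b₀ c)
    simpa using LinearMap.congr_fun this b
  have := ext_inclH ((D.BC.flip c).comp (LinearMap.mulRight ℂ b))
    (D.BC.flip (c * D.tC b))
    (fun a₀ => by simpa using hbc a₀ b c)
  simpa using LinearMap.congr_fun this a

-- plain orthogonality
lemma BC_20_20 {a b : ℂ ⊗[ℚ] H} (ha : a ∈ D.H20) (hb : b ∈ D.H20) : D.BC a b = 0 := by
  have := D.orth_20_02 a ha (sigmaC H b) (D.sigma_20 b hb)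
  rwa [sigmaC_sigmaC] at this

lemma BC_20_11 {a b : ℂ ⊗[ℚ] H} (ha : a ∈ D.H20) (hb : b ∈ D.H11) : D.BC a b = 0 := by
  have := D.orth_20_11 a ha (sigmaC H b) (D.sigma_11 b hb)
  rwa [sigmaC_sigmaC] at this

lemma BC_02_11 {a b : ℂ ⊗[ℚ] H} (ha : a ∈ D.H02) (hb : b ∈ D.H11) : D.BC a b = 0 := by
  have h0 : D.BC (sigmaC H a) (sigmaC H b) = 0 :=
    BC_20_11 D (D.sigma_02 a ha) (D.sigma_11 b hb)
  rw [D.BC_conj] at h0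
  exact star_eq_zero.mp h0

lemma BC_11_02 {a b : ℂ ⊗[ℚ] H} (ha : a ∈ D.H11) (hb : b ∈ D.H02) : D.BC a b = 0 := by
  rw [D.BC_symm]; exact BC_02_11 D hb ha

lemma decompA (a : ℂ ⊗[ℚ] H) :
    ∃ a1 ∈ D.H20, ∃ a2 ∈ D.H11, ∃ a3 ∈ D.H02, a = a1 + a2 + a3 := by
  have ha : a ∈ D.H20 ⊔ D.H11 ⊔ D.H02 := by rw [D.sup_top]; trivial
  rcases Submodule.mem_sup.mp ha with ⟨b, hb, a3, ha3, rfl⟩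
  rcases Submodule.mem_sup.mp hb with ⟨a1, ha1, a2, ha2, rfl⟩
  exact ⟨a1, ha1, a2, ha2, a3, ha3, rfl⟩

end Helpers
section Key
set_option synthInstance.maxHeartbeats 1000000
set_option maxHeartbeats 1000000

variable {H : Type} [Ring H] [Algebra ℚ H] [FiniteDimensional ℚ H]
variable (D : HodgeAlgebraData H)

lemma key_tC_H20 : ∀ x ∈ D.H20, ∃ x1 ∈ D.H20,
    ∃ x2 ∈ (D.H20 * D.H02 ⊔ D.H02 * D.H20 : Submodule ℂ (ℂ ⊗[ℚ] H)),
    ∃ x3 ∈ D.H02, D.tC x = x1 + x2 + x3 := by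
  intro x hx
  obtain ⟨x1, hx1, x2, hx2, x3, hx3, htC⟩ := decompA D (D.tC x)
  refine ⟨x1, hx1, x2, ?_, x3, hx3, htC⟩
  set M : Submodule ℂ (ℂ ⊗[ℚ] H) := D.H20 * D.H02 ⊔ D.H02 * D.H20 with hMdef
  have hML : M ≤ D.H11 :=
    sup_le (Submodule.mul_le.mpr D.mul_20_02) (Submodule.mul_le.mpr D.mul_02_20)
  -- inner product structure on H11 from the (negative of the) polarization
  letI core : InnerProductSpace.Core ℂ ↥D.H11 :=
  { inner := fun u v => - D.BC ↑v (sigmaC H ↑u)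
    conj_inner_symm := by
      intro u v
      show starRingEnd ℂ (- D.BC ↑u (sigmaC H ↑v)) = - D.BC ↑v (sigmaC H ↑u)
      rw [map_neg, ← D.BC_conj, sigmaC_sigmaC, D.BC_symm]
    re_inner_nonneg := by
      intro u
      show 0 ≤ (- D.BC ↑u (sigmaC H ↑u)).re
      rcases eq_or_ne (u : ℂ ⊗[ℚ] H) 0 with h | h
      · simp [h]
      · have := (D.neg_11 ↑u u.2 h).1
        rw [Complex.neg_re]; linarith
    add_left := by
      intro u v w
      show - D.BC ↑w (sigmaC H ↑(u + v))
          = - D.BC ↑w (sigmaC H ↑u) + - D.BC ↑w (sigmaC H ↑v)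
      push_cast [map_add]
      ring
    smul_left := by
      intro u v r
      show - D.BC ↑v (sigmaC H ↑(r • u)) = starRingEnd ℂ r * (- D.BC ↑v (sigmaC H ↑u))
      rw [Submodule.coe_smul, sigmaC_smul, map_smul, smul_eq_mul]
      ring
    definite := by
      intro u hu
      by_contra h
      have h' : (u : ℂ ⊗[ℚ] H) ≠ 0 := fun h0 => h (Subtype.ext h0)
      have := (D.neg_11 ↑u u.2 h').1
      have h0 : (- D.BC ↑u (sigmaC H ↑u)).re = 0 := by
        rw [show - D.BC ↑u (sigmaC H ↑u) = (0:ℂ) from hu]; simp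
      rw [Complex.neg_re] at h0
      linarith }
  letI : NormedAddCommGroup ↥D.H11 := core.toNormedAddCommGroup
  letI : InnerProductSpace ℂ ↥D.H11 := InnerProductSpace.ofCore core.toCore
  haveI : FiniteDimensional ℂ (ℂ ⊗[ℚ] H) := inferInstance
  haveI : FiniteDimensional ℂ ↥D.H11 := inferInstance
  letI : CompleteSpace ↥D.H11 := FiniteDimensional.complete ℂ _
  set M' : Submodule ℂ ↥D.H11 := M.comap D.H11.subtype with hM'def
  letI : CompleteSpace ↥M' := FiniteDimensional.complete ℂ _
  have hinner : ∀ u v : ↥D.H11, (inner ℂ u v : ℂ) = - D.BC ↑v (sigmaC H ↑u) := fun _ _ => rfl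
  have hx2M' : (⟨x2, hx2⟩ : ↥D.H11) ∈ M'ᗮᗮ := by
    rw [Submodule.mem_orthogonal]
    intro n hn
    rw [hinner]
    have hσn : sigmaC H ↑n ∈ D.H11 := D.sigma_11 _ n.2
    obtain ⟨e1, he1, e2, he2, e3, he3, hone⟩ := decompA D (1 : ℂ ⊗[ℚ] H)
    have hg : sigmaC H ↑n * x ∈ D.H20 := D.mul_11_20 _ hσn x hx
    have step1 : D.BC x2 (sigmaC H ↑n) = D.BC (D.tC x) (sigmaC H ↑n) := by
      rw [htC, map_add, map_add, LinearMap.add_apply, LinearMap.add_apply,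
        BC_20_11 D hx1 hσn, BC_02_11 D hx3 hσn]
      ring
    have step2 : D.BC (D.tC x) (sigmaC H ↑n) = D.BC (sigmaC H ↑n * x) 1 := by
      rw [BC_adj_right, one_mul, D.BC_symm]
    have step3 : D.BC (sigmaC H ↑n * x) 1 = D.BC (sigmaC H ↑n * x) e3 := by
      rw [hone, map_add, map_add, BC_20_20 D hg he1, BC_20_11 D hg he2]
      ring
    have step4 : D.BC (sigmaC H ↑n * x) e3 = D.BC (sigmaC H ↑n) (e3 * D.tC x) :=
      BC_adj_right D _ _ _
    have step5 : D.BC (sigmaC H ↑n) (e3 * D.tC x) = D.BC (sigmaC H ↑n) (e3 * x1) := by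
      rw [htC, mul_add, mul_add, map_add, map_add,
        BC_11_02 D hσn (D.mul_02_11 _ he3 _ hx2),
        D.mul_02_02 _ he3 _ hx3, map_zero]
      ring
    have step6 : D.BC (sigmaC H ↑n) (e3 * x1) = 0 := by
      have hu11 : e3 * x1 ∈ D.H11 := D.mul_02_20 _ he3 _ hx1
      have huM : e3 * x1 ∈ M := le_sup_right (α := Submodule ℂ (ℂ ⊗[ℚ] H))
        (Submodule.mul_mem_mul he3 hx1)
      have hnu : (inner ℂ (⟨e3 * x1, hu11⟩ : ↥D.H11) n : ℂ) = 0 :=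
        (Submodule.mem_orthogonal _ _).mp hn ⟨e3 * x1, hu11⟩ huM
      rw [hinner] at hnu
      have hBC : D.BC ↑n (sigmaC H (e3 * x1)) = 0 := by
        have := neg_eq_zero.mp hnu
        exact this
      have := D.BC_conj ↑n (sigmaC H (e3 * x1))
      rw [sigmaC_sigmaC, hBC, map_zero] at this
      exact this
    rw [step1, step2, step3, step4, step5, step6, neg_zero]
  rw [Submodule.orthogonal_orthogonal] at hx2M'
  exact hx2M'

end Key
/-- `W + σ(W)` is a two-sided ideal of the `ℂ`-algebra `H_ℂ`. Moreover
`W = H^{2,0} + H^{2,0}·H^{0,2}` with `H^{2,0}·H^{0,2} ⊆ H^{1,1}`, so that `W + σ(W)` is the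
direct sum of its intersections with `H^{2,0}`, `H^{1,1}` and `H^{0,2}` (it is stable under
the Hodge decomposition), and `t(W + σ(W)) ⊆ W + σ(W)`. -/
theorem W_plus_sigmaW_two_sided_ideal (D : HodgeAlgebraData H) :
    (∀ x ∈ (D.W.restrictScalars ℚ) ⊔ D.sigmaW, ∀ a : ℂ ⊗[ℚ] H,
        a * x ∈ (D.W.restrictScalars ℚ) ⊔ D.sigmaW ∧
        x * a ∈ (D.W.restrictScalars ℚ) ⊔ D.sigmaW) ∧
    D.W = D.H20 ⊔ D.H20 * D.H02 ∧
    D.H20 * D.H02 ≤ D.H11 ∧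
    (D.W.restrictScalars ℚ) ⊔ D.sigmaW =
      (((D.W.restrictScalars ℚ) ⊔ D.sigmaW) ⊓ D.H20.restrictScalars ℚ) ⊔
      (((D.W.restrictScalars ℚ) ⊔ D.sigmaW) ⊓ D.H11.restrictScalars ℚ) ⊔
      (((D.W.restrictScalars ℚ) ⊔ D.sigmaW) ⊓ D.H02.restrictScalars ℚ) ∧
    (∀ x ∈ (D.W.restrictScalars ℚ) ⊔ D.sigmaW,
        D.tC x ∈ (D.W.restrictScalars ℚ) ⊔ D.sigmaW) := by
  set I : Submodule ℚ (ℂ ⊗[ℚ] H) := (D.W.restrictScalars ℚ) ⊔ D.sigmaW with hIdef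
  -- basic membership facts
  have hWI : ∀ w ∈ D.W, w ∈ I := fun w hw =>
    Submodule.mem_sup_left (by simpa using hw)
  have hsWI : ∀ w ∈ D.W, sigmaC H w ∈ I := fun w hw =>
    Submodule.mem_sup_right (Submodule.mem_map_of_mem (by simpa using hw))
  have hmemI : ∀ x ∈ I, ∃ w ∈ D.W, ∃ w' ∈ D.W, x = w + sigmaC H w' := by
    intro x hx
    rcases Submodule.mem_sup.mp hx with ⟨w, hw, s, hs, rfl⟩
    rcases Submodule.mem_map.mp hs with ⟨w', hw', rfl⟩
    exact ⟨w, hw, w', hw', rfl⟩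
  have sigma_I : ∀ x ∈ I, sigmaC H x ∈ I := by
    intro x hx
    obtain ⟨w, hw, w', hw', rfl⟩ := hmemI x hx
    rw [map_add, sigmaC_sigmaC]
    exact add_mem (hsWI w hw) (hWI w' hw')
  have h20W : D.H20 ≤ D.W := by
    intro u hu
    show u ∈ D.H20 * ⊤
    simpa using Submodule.mul_mem_mul (M := D.H20) (N := (⊤ : Submodule ℂ (ℂ ⊗[ℚ] H)))
      hu (Submodule.mem_top (x := (1 : ℂ ⊗[ℚ] H)))
  have h02I : ∀ u ∈ D.H02, u ∈ I := by
    intro u hu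
    have : sigmaC H (sigmaC H u) = u := sigmaC_sigmaC u
    rw [← this]
    exact hsWI _ (h20W (D.sigma_02 u hu))
  -- right multiplication stability of W
  have right_W : ∀ w ∈ D.W, ∀ a : ℂ ⊗[ℚ] H, w * a ∈ D.W := by
    intro w hw a
    refine Submodule.mul_induction_on hw (fun m hm n _ => ?_) (fun x y hx hy => ?_)
    · rw [mul_assoc]
      exact Submodule.mul_mem_mul hm trivial
    · rw [add_mul]; exact add_mem hx hy
  -- left multiplication sends W into I
  have left_W : ∀ a : ℂ ⊗[ℚ] H, ∀ w ∈ D.W, a * w ∈ I := by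
    intro a w hw
    refine Submodule.mul_induction_on hw (fun m hm n _ => ?_) (fun x y hx hy => ?_)
    · obtain ⟨a1, ha1, a2, ha2, a3, ha3, rfl⟩ := decompA D a
      have e1 : a1 * m * n = 0 := by rw [D.mul_20_20 a1 ha1 m hm, zero_mul]
      have e2 : a2 * m * n ∈ D.W := Submodule.mul_mem_mul (D.mul_11_20 a2 ha2 m hm) trivial
      have e3 : a3 * (m * n) ∈ I := by
        have hs : sigmaC H (a3 * (m * n)) ∈ D.W := by
          rw [sigmaC_mul]
          exact Submodule.mul_mem_mul (D.sigma_02 a3 ha3) trivial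
        have : sigmaC H (sigmaC H (a3 * (m * n))) = a3 * (m * n) := sigmaC_sigmaC _
        rw [← this]
        exact hsWI _ hs
      have : (a1 + a2 + a3) * (m * n)
          = a1 * m * n + a2 * m * n + a3 * (m * n) := by noncomm_ring
      rw [this, e1, zero_add]
      exact add_mem (hWI _ e2) e3
    · rw [mul_add]; exact add_mem hx hy
  -- claim (a): two-sided ideal
  have claimA : ∀ x ∈ I, ∀ a : ℂ ⊗[ℚ] H, a * x ∈ I ∧ x * a ∈ I := by
    intro x hx a
    obtain ⟨w, hw, w', hw', rfl⟩ := hmemI x hx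
    constructor
    · rw [mul_add]
      refine add_mem (left_W a w hw) ?_
      have : a * sigmaC H w' = sigmaC H (sigmaC H a * w') := by
        rw [sigmaC_mul, sigmaC_sigmaC]
      rw [this]
      exact sigma_I _ (left_W (sigmaC H a) w' hw')
    · rw [add_mul]
      refine add_mem (hWI _ (right_W w hw a)) ?_
      have : sigmaC H w' * a = sigmaC H (w' * sigmaC H a) := by
        rw [sigmaC_mul, sigmaC_sigmaC]
      rw [this]
      exact hsWI _ (right_W w' hw' (sigmaC H a))
  -- claim (b): W = H20 ⊔ H20 * H02
  have claimB : D.W = D.H20 ⊔ D.H20 * D.H02 := by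
    apply le_antisymm
    · refine Submodule.mul_le.mpr (fun m hm n _ => ?_)
      obtain ⟨n1, hn1, n2, hn2, n3, hn3, rfl⟩ := decompA D n
      have : m * (n1 + n2 + n3) = m * n1 + m * n2 + m * n3 := by noncomm_ring
      rw [this, D.mul_20_20 m hm n1 hn1, zero_add]
      exact add_mem
        (Submodule.mem_sup_left (D.mul_20_11 m hm n2 hn2))
        (Submodule.mem_sup_right (Submodule.mul_mem_mul hm hn3))
    · refine sup_le h20W ?_
      calc D.H20 * D.H02 ≤ D.H20 * ⊤ := mul_le_mul_right le_top _
        _ = D.W := rfl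
  -- claim (c)
  have claimC : D.H20 * D.H02 ≤ D.H11 := Submodule.mul_le.mpr D.mul_20_02
  have hMW : D.H20 * D.H02 ≤ D.W := claimB ▸ le_sup_right
  have h0220I : ∀ u ∈ (D.H02 * D.H20 : Submodule ℂ (ℂ ⊗[ℚ] H)), u ∈ I := by
    intro u hu
    refine Submodule.mul_induction_on hu (fun m hm n hn => ?_) (fun x y hx hy => add_mem hx hy)
    have hs : sigmaC H (m * n) ∈ D.W := by
      rw [sigmaC_mul]
      exact hMW (Submodule.mul_mem_mul (D.sigma_02 m hm) (D.sigma_20 n hn))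
    have : sigmaC H (sigmaC H (m * n)) = m * n := sigmaC_sigmaC _
    rw [← this]
    exact hsWI _ hs
  -- claim (d): compatibility with the Hodge decomposition
  have claimD : I = (I ⊓ D.H20.restrictScalars ℚ) ⊔ (I ⊓ D.H11.restrictScalars ℚ)
      ⊔ (I ⊓ D.H02.restrictScalars ℚ) := by
    apply le_antisymm
    · intro x hx
      obtain ⟨w, hw, w', hw', rfl⟩ := hmemI x hx
      rw [claimB] at hw hw'
      rcases Submodule.mem_sup.mp hw with ⟨u, hu, m, hm, rfl⟩
      rcases Submodule.mem_sup.mp hw' with ⟨u', hu', m', hm', rfl⟩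
      have t1 : u ∈ (I ⊓ D.H20.restrictScalars ℚ) :=
        ⟨hWI u (h20W hu), hu⟩
      have t2 : m ∈ (I ⊓ D.H11.restrictScalars ℚ) :=
        ⟨hWI m (hMW hm), claimC hm⟩
      have t3 : sigmaC H m' ∈ (I ⊓ D.H11.restrictScalars ℚ) :=
        ⟨sigma_I _ (hWI m' (hMW hm')), D.sigma_11 m' (claimC hm')⟩
      have t4 : sigmaC H u' ∈ (I ⊓ D.H02.restrictScalars ℚ) :=
        ⟨hsWI u' (h20W hu'), D.sigma_20 u' hu'⟩
      have : u + m + sigmaC H (u' + m')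
          = (u + (m + sigmaC H m')) + sigmaC H u' := by
        rw [map_add]; abel
      rw [this]
      exact add_mem
        (add_mem (Submodule.mem_sup_left (Submodule.mem_sup_left t1))
          (Submodule.mem_sup_left (Submodule.mem_sup_right (add_mem t2 t3))))
        (Submodule.mem_sup_right t4)
    · exact sup_le (sup_le inf_le_left inf_le_left) inf_le_left
  -- claim (e): stability under tC
  have key2 : ∀ x ∈ D.H20, D.tC x ∈ I := by
    intro x hx
    obtain ⟨x1, hx1, x2, hx2, x3, hx3, htC⟩ := key_tC_H20 D x hx
    rw [htC]
    refine add_mem (add_mem (hWI _ (h20W hx1)) ?_) (h02I x3 hx3)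
    rcases Submodule.mem_sup.mp hx2 with ⟨p, hp, q, hq, rfl⟩
    exact add_mem (hWI _ (hMW hp)) (h0220I q hq)
  have tCW : ∀ w ∈ D.W, D.tC w ∈ I := by
    intro w hw
    refine Submodule.mul_induction_on hw (fun m hm n _ => ?_) (fun x y hx hy => ?_)
    · rw [tC_mul]
      exact (claimA _ (key2 m hm) (D.tC n)).1
    · rw [map_add]; exact add_mem hx hy
  have claimE : ∀ x ∈ I, D.tC x ∈ I := by
    intro x hx
    obtain ⟨w, hw, w', hw', rfl⟩ := hmemI x hx
    rw [map_add, tC_sigmaC]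
    exact add_mem (tCW w hw) (sigma_I _ (tCW w' hw'))
  exact ⟨claimA, claimB, claimC, claimD, claimE⟩
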